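/- Tsirelson's classical inequality: if (X₀, X₁, X₂) are real random variables on a common probability space satisfying Xₖ = cos(2πk/3)·X₀ + sin(2πk/3)·Y₀ pointwise for some random variable Y₀, then (1/3)·∑_{k=0}^{2} [P(Xₖ > 0) + (1/2)·P(Xₖ = 0)] ≤ 2/3. -/

import Mathlib

open Real MeasureTheory

private lemma key_ineq (a b c : ℝ) (h : a + b + c = 0) :
    ((if 0 < a then (1:ℝ) else 0) + (1/2) * (if a = 0 then (1:ℝ) else 0)) +
    (((if 0 < b then (1:ℝ) else 0) + (1/2) * (if b = 0 then (1:ℝ) else 0)) +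
    ((if 0 < c then (1:ℝ) else 0) + (1/2) * (if c = 0 then (1:ℝ) else 0))) ≤ 2 := by
  split_ifs <;> linarith

theorem stmt_2 {Ω : Type*} [MeasurableSpace Ω] (μ : Measure Ω) [IsProbabilityMeasure μ]
    (X₀ Y₀ : Ω → ℝ) (hX₀ : Measurable X₀) (hY₀ : Measurable Y₀)
    (X : Fin 3 → Ω → ℝ)
    (hX : ∀ (k : Fin 3) (ω : Ω),
      X k ω = Real.cos (2 * π * k / 3) * X₀ ω + Real.sin (2 * π * k / 3) * Y₀ ω) :
    (1 / 3) * ∑ k : Fin 3,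
      ((μ {ω | X k ω > 0}).toReal + (1 / 2) * (μ {ω | X k ω = 0}).toReal) ≤ 2 / 3 := by
  have hXm : ∀ k, Measurable (X k) := by
    intro k
    have : X k = fun ω => Real.cos (2 * π * k / 3) * X₀ ω + Real.sin (2 * π * k / 3) * Y₀ ω :=
      funext (hX k)
    rw [this]
    exact (hX₀.const_mul _).add (hY₀.const_mul _)
  -- angle evaluations
  have e1 : (2 * π * ((1 : Fin 3) : ℝ) / 3) = π - π / 3 := by
    norm_num; ring
  have e2 : (2 * π * ((2 : Fin 3) : ℝ) / 3) = π + π / 3 := by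
    norm_num; ring
  have hsum : ∀ ω, X 0 ω + X 1 ω + X 2 ω = 0 := by
    intro ω
    rw [hX 0 ω, hX 1 ω, hX 2 ω, e1, e2, Real.cos_pi_sub, Real.sin_pi_sub, Real.cos_add,
      Real.sin_add, Real.cos_pi, Real.sin_pi, Real.cos_pi_div_three, Real.sin_pi_div_three]
    norm_num
    ring
  -- sets
  have hs1 : ∀ k, MeasurableSet {ω | X k ω > 0} :=
    fun k => measurableSet_lt measurable_const (hXm k)
  have hs2 : ∀ k, MeasurableSet {ω | X k ω = 0} :=
    fun k => (hXm k) (measurableSet_singleton 0)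
  set f : Fin 3 → Ω → ℝ := fun k ω =>
    ({ω | X k ω > 0}.indicator 1 ω) + (1/2) * ({ω | X k ω = 0}.indicator 1 ω) with hf
  have I1 : ∀ k, Integrable (fun ω => ({ω' | X k ω' > 0}.indicator (1 : Ω → ℝ) ω)) μ :=
    fun k => (integrable_const 1).indicator (hs1 k)
  have I2 : ∀ k, Integrable (fun ω => (1/2 : ℝ) * ({ω' | X k ω' = 0}.indicator (1 : Ω → ℝ) ω)) μ :=
    fun k => ((integrable_const 1).indicator (hs2 k)).const_mul _
  have hint : ∀ k, Integrable (f k) μ := fun k => (I1 k).add (I2 k)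
  have hrep : ∀ k, (μ {ω | X k ω > 0}).toReal + (1 / 2) * (μ {ω | X k ω = 0}).toReal
      = ∫ ω, f k ω ∂μ := by
    intro k
    simp only [hf]
    rw [integral_add (I1 k) (I2 k), integral_const_mul, integral_indicator_one (hs1 k),
      integral_indicator_one (hs2 k)]
    rfl
  have hbound : ∀ ω, ∑ k : Fin 3, f k ω ≤ 2 := by
    intro ω
    rw [Fin.sum_univ_three, hf]
    simp only [Set.indicator_apply, Set.mem_setOf_eq, Pi.one_apply, gt_iff_lt]
    have := key_ineq (X 0 ω) (X 1 ω) (X 2 ω) (hsum ω)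
    linarith
  have hS : ∑ k : Fin 3, ((μ {ω | X k ω > 0}).toReal + (1 / 2) * (μ {ω | X k ω = 0}).toReal)
      ≤ 2 := by
    calc ∑ k : Fin 3, ((μ {ω | X k ω > 0}).toReal + (1 / 2) * (μ {ω | X k ω = 0}).toReal)
        = ∑ k : Fin 3, ∫ ω, f k ω ∂μ := by
          exact Finset.sum_congr rfl (fun k _ => hrep k)
      _ = ∫ ω, ∑ k : Fin 3, f k ω ∂μ := (integral_finset_sum _ (fun k _ => hint k)).symm
      _ ≤ ∫ _, (2:ℝ) ∂μ := by
          refine integral_mono (integrable_finset_sum _ (fun k _ => hint k))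
            (integrable_const 2) ?_
          intro ω; exact hbound ω
      _ = 2 := by simp
  linarith
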